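/- Let μ, ξ, t ∈ ℝ with ξ > 0 and t + ξ/2 < 0, and let ε ∈ (0,1). Let F₁ and F₂ denote the cumulative distribution functions of N(μ, 1) and N(μ + ξ, 1), respectively. If ξ > log(1 + ε/(1−ε)) / |t|, then F₂(t + μ + ξ/2) < (1−ε)·F₁(t + μ + ξ/2). -/

import Mathlib

open MeasureTheory

/-- The probability density function of the standard Gaussian `N(0,1)`. -/
noncomputable def gaussPDF (x : ℝ) : ℝ := Real.exp (-x ^ 2 / 2) / Real.sqrt (2 * Real.pi)

/-- The cumulative distribution function of the standard Gaussian `N(0,1)`. -/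
noncomputable def stdGaussCDF (t : ℝ) : ℝ := ∫ y in Set.Iic t, gaussPDF y

lemma gaussPDF_pos (x : ℝ) : 0 < gaussPDF x := by
  unfold gaussPDF
  positivity

lemma gaussPDF_integrable : Integrable gaussPDF := by
  have h : Integrable (fun x : ℝ => Real.exp (-(1/2) * x ^ 2)) :=
    integrable_exp_neg_mul_sq (by norm_num)
  have : gaussPDF = fun x => Real.exp (-(1/2) * x ^ 2) * (1 / Real.sqrt (2 * Real.pi)) := by
    funext x; unfold gaussPDF; ring_nf
  rw [this]
  exact h.mul_const _

/-- If `ξ > log(1 + ε/(1−ε))/|t|` (with `ξ > 0`, `t + ξ/2 < 0`, `ε ∈ (0,1)`),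
then the CDFs `F₁` of `N(μ,1)` and `F₂` of `N(μ+ξ,1)` satisfy
`F₂(t + μ + ξ/2) < (1−ε)·F₁(t + μ + ξ/2)`. -/
theorem stmt14 (μ ξ t ε : ℝ) (hξ : 0 < ξ) (ht : t + ξ / 2 < 0)
    (hε : ε ∈ Set.Ioo (0 : ℝ) 1)
    (h : ξ > Real.log (1 + ε / (1 - ε)) / |t|) :
    stdGaussCDF ((t + μ + ξ / 2) - (μ + ξ)) <
      (1 - ε) * stdGaussCDF ((t + μ + ξ / 2) - μ) := by
  obtain ⟨hε0, hε1⟩ := hε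
  have ht0 : t < 0 := by linarith
  have h1ε : (0:ℝ) < 1 - ε := by linarith
  -- key exponent bound : ξ * t < log (1 - ε)
  have hlog : Real.log (1 + ε / (1 - ε)) = - Real.log (1 - ε) := by
    have : 1 + ε / (1 - ε) = (1 - ε)⁻¹ := by field_simp; ring
    rw [this, Real.log_inv]
  have habs : |t| = -t := abs_of_neg ht0
  have hξt : ξ * t < Real.log (1 - ε) := by
    rw [habs, hlog] at h
    have h' : ξ * (-t) > -Real.log (1 - ε) := by
      have := (div_lt_iff₀ (by linarith : (0:ℝ) < -t)).mp h
      linarith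
    nlinarith
  have hexp : Real.exp (ξ * t) < 1 - ε := by
    calc Real.exp (ξ * t) < Real.exp (Real.log (1 - ε)) := Real.exp_lt_exp.mpr hξt
    _ = 1 - ε := Real.exp_log h1ε
  -- rewrite arguments
  have e1 : (t + μ + ξ / 2) - (μ + ξ) = t - ξ / 2 := by ring
  have e2 : (t + μ + ξ / 2) - μ = t + ξ / 2 := by ring
  rw [e1, e2]
  -- change of variables
  have hmp : MeasurePreserving (fun y : ℝ => y - ξ) volume volume :=
    measurePreserving_sub_right volume ξ
  have hemb : MeasurableEmbedding (fun y : ℝ => y - ξ) :=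
    (MeasurableEquiv.subRight ξ).measurableEmbedding
  have hpre : (fun y : ℝ => y - ξ) ⁻¹' Set.Iic (t - ξ / 2) = Set.Iic (t + ξ / 2) := by
    ext y
    simp [Set.mem_Iic, sub_le_iff_le_add]
    constructor <;> intro <;> linarith
  have hcov : stdGaussCDF (t - ξ / 2) = ∫ y in Set.Iic (t + ξ / 2), gaussPDF (y - ξ) := by
    unfold stdGaussCDF
    rw [← hmp.setIntegral_preimage_emb hemb gaussPDF (Set.Iic (t - ξ / 2)), hpre]
  rw [hcov]
  -- pointwise bound on the set
  have hpt : ∀ y ∈ Set.Iic (t + ξ / 2),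
      gaussPDF (y - ξ) ≤ Real.exp (ξ * t) * gaussPDF y := by
    intro y hy
    have hy' : y ≤ t + ξ / 2 := hy
    unfold gaussPDF
    rw [div_le_iff₀ (by positivity : (0:ℝ) < Real.sqrt (2 * Real.pi))]
    have : Real.exp (ξ * t) * (Real.exp (-y ^ 2 / 2) / Real.sqrt (2 * Real.pi)) *
        Real.sqrt (2 * Real.pi) = Real.exp (ξ * t + -y ^ 2 / 2) := by
      rw [Real.exp_add]
      field_simp
    rw [this]
    apply Real.exp_le_exp.mpr
    nlinarith [sq_nonneg (y - ξ)]
  -- integrabilities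
  have hint1 : IntegrableOn (fun y => gaussPDF (y - ξ)) (Set.Iic (t + ξ / 2)) :=
    (gaussPDF_integrable.comp_sub_right ξ).integrableOn
  have hint2 : IntegrableOn (fun y => Real.exp (ξ * t) * gaussPDF y) (Set.Iic (t + ξ / 2)) :=
    (gaussPDF_integrable.const_mul _).integrableOn
  have hle : (∫ y in Set.Iic (t + ξ / 2), gaussPDF (y - ξ)) ≤
      ∫ y in Set.Iic (t + ξ / 2), Real.exp (ξ * t) * gaussPDF y :=
    setIntegral_mono_on hint1 hint2 measurableSet_Iic hpt
  have hpos : 0 < stdGaussCDF (t + ξ / 2) := by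
    unfold stdGaussCDF
    rw [setIntegral_pos_iff_support_of_nonneg_ae
      (Filter.Eventually.of_forall fun y => (gaussPDF_pos y).le)
      gaussPDF_integrable.integrableOn]
    have : Function.support gaussPDF = Set.univ := by
      ext y; simp [Function.mem_support, (gaussPDF_pos y).ne']
    rw [this, Set.univ_inter]
    simp [Real.volume_Iic]
  calc (∫ y in Set.Iic (t + ξ / 2), gaussPDF (y - ξ))
      ≤ ∫ y in Set.Iic (t + ξ / 2), Real.exp (ξ * t) * gaussPDF y := hle
    _ = Real.exp (ξ * t) * stdGaussCDF (t + ξ / 2) := by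
        rw [integral_const_mul]; rfl
    _ < (1 - ε) * stdGaussCDF (t + ξ / 2) := by
        exact mul_lt_mul_of_pos_right hexp hpos
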